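/- arXiv:2307.09236 — 4 statements merged into one kernel-verified Lean document; each statement's English description precedes it below -/
import Mathlib

section
/- Let U : ℝ^d × ℝ → ℝ be continuously differentiable, let φ : ℝ^d → ℝ be continuously differentiable, define u(x) = U(x, |φ(x)|), and let μ⁺, μ⁻ ∈ ℝ. Let x_Γ satisfy φ(x_Γ) = 0 and lie in the closure of {φ > 0} and of {φ < 0}. Then μ⁺∇u(x) → μ⁺(∇_x U(x_Γ, 0) + ∂_z U(x_Γ, 0)∇φ(x_Γ)) as x → x_Γ within {φ > 0}, μ⁻∇u(x) → μ⁻(∇_x U(x_Γ, 0) − ∂_z U(x_Γ, 0)∇φ(x_Γ)) as x → x_Γ within {φ < 0}, and hence the jump satisfies [μ∇u](x_Γ) = (μ⁺ − μ⁻)∇_x U(x_Γ, 0) + (μ⁺ + μ⁻)∂_z U(x_Γ, 0)∇φ(x_Γ), where μ takes the value μ⁺ on {φ > 0} and μ⁻ on {φ < 0}. -/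
open Topology Filter InnerProductSpace

lemma grad_comp_eq (d : ℕ) (U : EuclideanSpace ℝ (Fin d) × ℝ → ℝ)
    (φ : EuclideanSpace ℝ (Fin d) → ℝ)
    (hU : ContDiff ℝ 1 U) (hφ : ContDiff ℝ 1 φ)
    (xΓ : EuclideanSpace ℝ (Fin d)) (h0 : φ xΓ = 0) (ε : ℝ) :
    gradient (fun y => U (y, ε * φ y)) xΓ
      = gradient (fun y => U (y, 0)) xΓ
        + (ε * deriv (fun t => U (xΓ, t)) 0) • gradient φ xΓ := by
  set D := fderiv ℝ U (xΓ, 0) with hDdef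
  have hD : HasFDerivAt U D (xΓ, 0) := (hU.differentiable one_ne_zero (xΓ, 0)).hasFDerivAt
  set L := fderiv ℝ φ xΓ with hLdef
  have hL : HasFDerivAt φ L xΓ := (hφ.differentiable one_ne_zero xΓ).hasFDerivAt
  have hinner : HasFDerivAt (fun y : EuclideanSpace ℝ (Fin d) => (y, ε * φ y))
      ((ContinuousLinearMap.id ℝ _).prod (ε • L)) xΓ :=
    (hasFDerivAt_id xΓ).prodMk (hL.const_mul ε)
  have hpt : (xΓ, ε * φ xΓ) = (xΓ, (0:ℝ)) := by simp [h0]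
  have hcomp : HasFDerivAt (fun y => U (y, ε * φ y))
      (D.comp ((ContinuousLinearMap.id ℝ _).prod (ε • L))) xΓ := by
    have := (hpt ▸ hD).comp xΓ hinner
    exact this
  have hinner0 : HasFDerivAt (fun y : EuclideanSpace ℝ (Fin d) => (y, (0:ℝ)))
      ((ContinuousLinearMap.id ℝ _).prod 0) xΓ :=
    (hasFDerivAt_id xΓ).prodMk (hasFDerivAt_const 0 xΓ)
  have h2 : HasFDerivAt (fun y => U (y, (0:ℝ)))
      (D.comp ((ContinuousLinearMap.id ℝ _).prod 0)) xΓ := hD.comp xΓ hinner0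
  have hderivt : HasDerivAt (fun t => U (xΓ, t)) (D (0, 1)) 0 := by
    have hin : HasDerivAt (fun t : ℝ => (xΓ, t)) ((0 : EuclideanSpace ℝ (Fin d)), (1:ℝ)) 0 :=
      (hasDerivAt_const 0 xΓ).prodMk (hasDerivAt_id 0)
    exact hD.comp_hasDerivAt 0 hin
  rw [hderivt.deriv]
  rw [gradient, gradient, gradient, hcomp.fderiv, h2.fderiv, ← hLdef]
  apply (toDual ℝ (EuclideanSpace ℝ (Fin d))).injective
  rw [map_add, map_smul]
  simp only [LinearIsometryEquiv.apply_symm_apply]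
  ext v
  simp only [ContinuousLinearMap.coe_comp', Function.comp_apply,
    ContinuousLinearMap.prod_apply, ContinuousLinearMap.coe_id', id_eq,
    ContinuousLinearMap.add_apply, ContinuousLinearMap.coe_smul', Pi.smul_apply,
    ContinuousLinearMap.smul_apply, ContinuousLinearMap.zero_apply, smul_eq_mul]
  have hsplit : (v, ε * L v) = (v, (0:ℝ)) + (ε * L v) • ((0 : EuclideanSpace ℝ (Fin d)), (1:ℝ)) := by
    simp [Prod.ext_iff]
  rw [hsplit, map_add, map_smul]
  simp [smul_eq_mul]
  ring

lemma tendsto_grad_aux (d : ℕ) (U : EuclideanSpace ℝ (Fin d) × ℝ → ℝ)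
    (φ : EuclideanSpace ℝ (Fin d) → ℝ)
    (hU : ContDiff ℝ 1 U) (hφ : ContDiff ℝ 1 φ) (ε : ℝ)
    (s : Set (EuclideanSpace ℝ (Fin d))) (hs : IsOpen s)
    (habs : ∀ x ∈ s, |φ x| = ε * φ x) (xΓ : EuclideanSpace ℝ (Fin d)) :
    Tendsto (fun x => gradient (fun y => U (y, |φ y|)) x) (𝓝[s] xΓ)
      (𝓝 (gradient (fun y => U (y, ε * φ y)) xΓ)) := by
  set g := fun y => U (y, ε * φ y) with hgdef
  have hg : ContDiff ℝ 1 g := hU.comp (ContDiff.prodMk contDiff_id (contDiff_const.mul hφ))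
  have hcont : Continuous fun x => gradient g x := by
    exact (InnerProductSpace.toDual ℝ (EuclideanSpace ℝ (Fin d))).symm.continuous.comp
      (hg.continuous_fderiv one_ne_zero)
  have ht : Tendsto (fun x => gradient g x) (𝓝[s] xΓ) (𝓝 (gradient g xΓ)) :=
    (hcont.tendsto xΓ).mono_left nhdsWithin_le_nhds
  refine ht.congr' ?_
  filter_upwards [self_mem_nhdsWithin] with x hx
  apply Filter.EventuallyEq.gradient_eq
  filter_upwards [hs.mem_nhds hx] with y hy
  rw [habs y hy]

/-- One-sided limits and jump of `μ ∇u` across the interface for the cusp-capturing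
representation `u(x) = U(x, |φ(x)|)`:
`[μ∇u](x_Γ) = (μ⁺-μ⁻) ∇_x U(x_Γ,0) + (μ⁺+μ⁻) ∂_z U(x_Γ,0) ∇φ(x_Γ)`. -/
theorem stmt_6 (d : ℕ) (U : EuclideanSpace ℝ (Fin d) × ℝ → ℝ)
    (φ : EuclideanSpace ℝ (Fin d) → ℝ)
    (hU : ContDiff ℝ 1 U) (hφ : ContDiff ℝ 1 φ) (μp μm : ℝ)
    (xΓ : EuclideanSpace ℝ (Fin d)) (h0 : φ xΓ = 0)
    (hcp : xΓ ∈ closure {x | 0 < φ x}) (hcm : xΓ ∈ closure {x | φ x < 0}) :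
    Tendsto (fun x => μp • gradient (fun y => U (y, |φ y|)) x) (𝓝[{x | 0 < φ x}] xΓ)
      (𝓝 (μp • (gradient (fun y => U (y, 0)) xΓ
            + (deriv (fun t => U (xΓ, t)) 0) • gradient φ xΓ)))
    ∧ Tendsto (fun x => μm • gradient (fun y => U (y, |φ y|)) x) (𝓝[{x | φ x < 0}] xΓ)
      (𝓝 (μm • (gradient (fun y => U (y, 0)) xΓ
            - (deriv (fun t => U (xΓ, t)) 0) • gradient φ xΓ)))
    ∧ ∀ Lp Lm : EuclideanSpace ℝ (Fin d),
        Tendsto (fun x => μp • gradient (fun y => U (y, |φ y|)) x)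
          (𝓝[{x | 0 < φ x}] xΓ) (𝓝 Lp) →
        Tendsto (fun x => μm • gradient (fun y => U (y, |φ y|)) x)
          (𝓝[{x | φ x < 0}] xΓ) (𝓝 Lm) →
        Lp - Lm = (μp - μm) • gradient (fun y => U (y, 0)) xΓ
          + ((μp + μm) * deriv (fun t => U (xΓ, t)) 0) • gradient φ xΓ := by
  have hsp : IsOpen {x | 0 < φ x} := isOpen_lt continuous_const hφ.continuous
  have hsm : IsOpen {x | φ x < 0} := isOpen_lt hφ.continuous continuous_const
  have hp := tendsto_grad_aux d U φ hU hφ 1 _ hsp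
    (fun x hx => by rw [abs_of_pos hx, one_mul]) xΓ
  have hm := tendsto_grad_aux d U φ hU hφ (-1) _ hsm
    (fun x hx => by rw [abs_of_neg hx]; ring) xΓ
  rw [grad_comp_eq d U φ hU hφ xΓ h0 1] at hp
  rw [grad_comp_eq d U φ hU hφ xΓ h0 (-1)] at hm
  simp only [one_mul, neg_one_mul, neg_smul, ← sub_eq_add_neg] at hp hm
  refine ⟨hp.const_smul μp, hm.const_smul μm, ?_⟩
  intro Lp Lm hLp hLm
  haveI : (𝓝[{x | 0 < φ x}] xΓ).NeBot := mem_closure_iff_nhdsWithin_neBot.mp hcp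
  haveI : (𝓝[{x | φ x < 0}] xΓ).NeBot := mem_closure_iff_nhdsWithin_neBot.mp hcm
  have e1 := tendsto_nhds_unique hLp (hp.const_smul μp)
  have e2 := tendsto_nhds_unique hLm (hm.const_smul μm)
  rw [e1, e2]
  set A := gradient (fun y => U (y, 0)) xΓ
  set B := gradient φ xΓ
  set c := deriv (fun t => U (xΓ, t)) 0
  module
end

section
/- Let U : ℝ^d × ℝ → ℝ be continuously differentiable, let φ : ℝ^d → ℝ be continuously differentiable, define u(x) = U(x, |φ(x)|), and let μ⁺, μ⁻ ∈ ℝ. Let x_Γ satisfy φ(x_Γ) = 0, lie in the closure of {φ > 0} and of {φ < 0}, and assume ∇φ(x_Γ) ≠ 0; set n = ∇φ(x_Γ)/‖∇φ(x_Γ)‖. Then the jump of the scaled normal derivative satisfies [μ ∂u/∂n](x_Γ) = (μ⁺ − μ⁻)(∇_x U(x_Γ, 0) · n) + (μ⁺ + μ⁻) ∂_z U(x_Γ, 0) ‖∇φ(x_Γ)‖, where ∂u/∂n = ∇u · n and μ equals μ⁺ on {φ > 0} and μ⁻ on {φ < 0}. -/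
open Topology Filter

lemma inner_gradient_apply {E : Type*} [NormedAddCommGroup E] [InnerProductSpace ℝ E]
    [CompleteSpace E] (f : E → ℝ) (x v : E) :
    (inner ℝ (gradient f x) v : ℝ) = fderiv ℝ f x v :=
  InnerProductSpace.toDual_symm_apply

/-- Jump of the scaled normal derivative `[μ ∂u/∂n]` across the interface for the
cusp-capturing representation `u(x) = U(x, |φ(x)|)`, with unit normal
`n = ∇φ(x_Γ)/‖∇φ(x_Γ)‖`:
`[μ ∂u/∂n](x_Γ) = (μ⁺-μ⁻)(∇_x U(x_Γ,0)·n) + (μ⁺+μ⁻) ∂_z U(x_Γ,0) ‖∇φ(x_Γ)‖`. -/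
theorem stmt_7 (d : ℕ) (U : EuclideanSpace ℝ (Fin d) × ℝ → ℝ)
    (φ : EuclideanSpace ℝ (Fin d) → ℝ)
    (hU : ContDiff ℝ 1 U) (hφ : ContDiff ℝ 1 φ) (μp μm : ℝ)
    (xΓ : EuclideanSpace ℝ (Fin d)) (h0 : φ xΓ = 0)
    (hcp : xΓ ∈ closure {x | 0 < φ x}) (hcm : xΓ ∈ closure {x | φ x < 0})
    (hgrad : gradient φ xΓ ≠ 0)
    (n : EuclideanSpace ℝ (Fin d)) (hn : n = ‖gradient φ xΓ‖⁻¹ • gradient φ xΓ) :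
    ∃ Lp Lm : ℝ,
      Tendsto (fun x => μp * (inner ℝ (gradient (fun y => U (y, |φ y|)) x) n : ℝ))
        (𝓝[{x | 0 < φ x}] xΓ) (𝓝 Lp)
      ∧ Tendsto (fun x => μm * (inner ℝ (gradient (fun y => U (y, |φ y|)) x) n : ℝ))
        (𝓝[{x | φ x < 0}] xΓ) (𝓝 Lm)
      ∧ Lp - Lm = (μp - μm) * (inner ℝ (gradient (fun y => U (y, 0)) xΓ) n : ℝ)
          + (μp + μm) * deriv (fun t => U (xΓ, t)) 0 * ‖gradient φ xΓ‖ := by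
  classical
  have hφd : Differentiable ℝ φ := hφ.differentiable one_ne_zero
  have hUd : Differentiable ℝ U := hU.differentiable one_ne_zero
  let Fp : EuclideanSpace ℝ (Fin d) → ℝ := fun y => U (y, φ y)
  let Fm : EuclideanSpace ℝ (Fin d) → ℝ := fun y => U (y, -φ y)
  have hFpC : ContDiff ℝ 1 Fp := hU.comp (contDiff_id.prodMk hφ)
  have hFmC : ContDiff ℝ 1 Fm := hU.comp (contDiff_id.prodMk hφ.neg)
  have hchain : ∀ x : EuclideanSpace ℝ (Fin d), HasFDerivAt Fp
      ((fderiv ℝ U (x, φ x)).comp ((ContinuousLinearMap.id ℝ (EuclideanSpace ℝ (Fin d))).prod (fderiv ℝ φ x))) x :=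
    fun x => (hUd (x, φ x)).hasFDerivAt.comp x ((hasFDerivAt_id x).prodMk (hφd x).hasFDerivAt)
  have hchainm : ∀ x : EuclideanSpace ℝ (Fin d), HasFDerivAt Fm
      ((fderiv ℝ U (x, -φ x)).comp ((ContinuousLinearMap.id ℝ (EuclideanSpace ℝ (Fin d))).prod (-fderiv ℝ φ x))) x :=
    fun x => (hUd (x, -φ x)).hasFDerivAt.comp x ((hasFDerivAt_id x).prodMk (hφd x).hasFDerivAt.neg)
  have hcontp : Continuous fun x => fderiv ℝ Fp x n :=
    (hFpC.continuous_fderiv one_ne_zero).clm_apply continuous_const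
  have hcontm : Continuous fun x => fderiv ℝ Fm x n :=
    (hFmC.continuous_fderiv one_ne_zero).clm_apply continuous_const
  have hop : IsOpen {x : EuclideanSpace ℝ (Fin d) | 0 < φ x} := isOpen_lt continuous_const hφ.continuous
  have hom : IsOpen {x : EuclideanSpace ℝ (Fin d) | φ x < 0} := isOpen_lt hφ.continuous continuous_const
  have hgp : ∀ x ∈ {x : EuclideanSpace ℝ (Fin d) | 0 < φ x},
      (inner ℝ (gradient (fun y => U (y, |φ y|)) x) n : ℝ) = fderiv ℝ Fp x n := by
    intro x hx
    have hev : (fun y => U (y, |φ y|)) =ᶠ[𝓝 x] Fp := by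
      filter_upwards [hop.mem_nhds hx] with y hy
      simp [Fp, abs_of_pos hy]
    rw [inner_gradient_apply, hev.fderiv_eq]
  have hgm : ∀ x ∈ {x : EuclideanSpace ℝ (Fin d) | φ x < 0},
      (inner ℝ (gradient (fun y => U (y, |φ y|)) x) n : ℝ) = fderiv ℝ Fm x n := by
    intro x hx
    have hev : (fun y => U (y, |φ y|)) =ᶠ[𝓝 x] Fm := by
      filter_upwards [hom.mem_nhds hx] with y hy
      simp [Fm, abs_of_neg hy]
    rw [inner_gradient_apply, hev.fderiv_eq]
  refine ⟨μp * fderiv ℝ Fp xΓ n, μm * fderiv ℝ Fm xΓ n, ?_, ?_, ?_⟩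
  · refine Tendsto.congr' ?_ (((hcontp.tendsto xΓ).const_mul μp).mono_left nhdsWithin_le_nhds)
    filter_upwards [self_mem_nhdsWithin] with x hx
    rw [hgp x hx]
  · refine Tendsto.congr' ?_ (((hcontm.tendsto xΓ).const_mul μm).mono_left nhdsWithin_le_nhds)
    filter_upwards [self_mem_nhdsWithin] with x hx
    rw [hgm x hx]
  · have hφn : fderiv ℝ φ xΓ n = ‖gradient φ xΓ‖ := by
      rw [← inner_gradient_apply φ xΓ n, hn, real_inner_smul_right, real_inner_self_eq_norm_sq]
      have h : ‖gradient φ xΓ‖ ≠ 0 := norm_ne_zero_iff.mpr hgrad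
      field_simp
    set L := fderiv ℝ U (xΓ, 0) with hL
    have hFpn : fderiv ℝ Fp xΓ n = L (n, ‖gradient φ xΓ‖) := by
      rw [(hchain xΓ).fderiv]
      simp [h0, hφn, hL]
    have hFmn : fderiv ℝ Fm xΓ n = L (n, -‖gradient φ xΓ‖) := by
      rw [(hchainm xΓ).fderiv]
      simp [h0, hφn, hL]
    have hA : (inner ℝ (gradient (fun y => U (y, 0)) xΓ) n : ℝ) = L (n, (0:ℝ)) := by
      rw [inner_gradient_apply]
      have h1 : HasFDerivAt (fun y : EuclideanSpace ℝ (Fin d) => U (y, (0:ℝ)))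
          (L.comp ((ContinuousLinearMap.id ℝ (EuclideanSpace ℝ (Fin d))).prod 0)) xΓ := by
        have h2 : HasFDerivAt (fun y : EuclideanSpace ℝ (Fin d) => (y, (0:ℝ)))
            ((ContinuousLinearMap.id ℝ (EuclideanSpace ℝ (Fin d))).prod 0) xΓ :=
          (hasFDerivAt_id xΓ).prodMk (hasFDerivAt_const 0 xΓ)
        exact (hUd (xΓ, 0)).hasFDerivAt.comp xΓ h2
      rw [h1.fderiv]
      simp
    have hB : deriv (fun t => U (xΓ, t)) 0 = L ((0:EuclideanSpace ℝ (Fin d)), (1:ℝ)) := by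
      have h2 : HasDerivAt (fun t : ℝ => ((xΓ, t) : EuclideanSpace ℝ (Fin d) × ℝ)) (((0:EuclideanSpace ℝ (Fin d)), (1:ℝ))) 0 :=
        (hasDerivAt_const (0:ℝ) xΓ).prodMk (hasDerivAt_id 0)
      have h1 : HasDerivAt (fun t : ℝ => U (xΓ, t)) (L ((0:EuclideanSpace ℝ (Fin d)), (1:ℝ))) 0 := by
        exact (hUd (xΓ, 0)).hasFDerivAt.comp_hasDerivAt 0 h2
      exact h1.deriv
    have hsplit : ∀ t : ℝ, L (n, t) = L (n, 0) + t * L ((0:EuclideanSpace ℝ (Fin d)), (1:ℝ)) := by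
      intro t
      have h3 : ((n, t) : EuclideanSpace ℝ (Fin d) × ℝ) = (n, 0) + t • ((0:EuclideanSpace ℝ (Fin d)), (1:ℝ)) := by simp
      rw [h3, map_add, map_smul, smul_eq_mul]
    rw [hFpn, hFmn, hA, hB, hsplit ‖gradient φ xΓ‖, hsplit (-‖gradient φ xΓ‖)]
    ring
end

section
/- Let U : ℝ^d × ℝ → ℝ^d be continuously differentiable, let φ : ℝ^d → ℝ be continuously differentiable, define u(x) = U(x, |φ(x)|), and let μ⁺, μ⁻ ∈ ℝ. Let x_Γ satisfy φ(x_Γ) = 0, lie in the closure of {φ > 0} and of {φ < 0}, and assume ∇φ(x_Γ) ≠ 0; set n = ∇φ(x_Γ)/‖∇φ(x_Γ)‖. Then for each k = 1,…,d, the jump satisfies [μ ∂u/∂x_k](x_Γ) · n = (μ⁺ − μ⁻)(∂U/∂x_k (x_Γ, 0) · n) + (μ⁺ + μ⁻)(∂U/∂z (x_Γ, 0) · n) · ∂φ/∂x_k(x_Γ), where μ equals μ⁺ on {φ > 0} and μ⁻ on {φ < 0}. -/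
open Topology Filter

/-- Jump of `μ ∂u/∂x_k` dotted with the unit normal `n = ∇φ(x_Γ)/‖∇φ(x_Γ)‖` for the
vector-valued cusp-capturing representation `u(x) = U(x, |φ(x)|)`:
`[μ ∂u/∂x_k](x_Γ)·n = (μ⁺-μ⁻)(∂U/∂x_k(x_Γ,0)·n) + (μ⁺+μ⁻)(∂U/∂z(x_Γ,0)·n) ∂φ/∂x_k(x_Γ)`. -/
theorem stmt_8 (d : ℕ)
    (U : EuclideanSpace ℝ (Fin d) × ℝ → EuclideanSpace ℝ (Fin d))
    (φ : EuclideanSpace ℝ (Fin d) → ℝ)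
    (hU : ContDiff ℝ 1 U) (hφ : ContDiff ℝ 1 φ) (μp μm : ℝ)
    (xΓ : EuclideanSpace ℝ (Fin d)) (h0 : φ xΓ = 0)
    (hcp : xΓ ∈ closure {x | 0 < φ x}) (hcm : xΓ ∈ closure {x | φ x < 0})
    (hgrad : gradient φ xΓ ≠ 0)
    (n : EuclideanSpace ℝ (Fin d)) (hn : n = ‖gradient φ xΓ‖⁻¹ • gradient φ xΓ)
    (k : Fin d) :
    ∃ Lp Lm : EuclideanSpace ℝ (Fin d),
      Tendsto (fun x => μp • fderiv ℝ (fun y => U (y, |φ y|)) x (EuclideanSpace.single k 1))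
        (𝓝[{x | 0 < φ x}] xΓ) (𝓝 Lp)
      ∧ Tendsto (fun x => μm • fderiv ℝ (fun y => U (y, |φ y|)) x (EuclideanSpace.single k 1))
        (𝓝[{x | φ x < 0}] xΓ) (𝓝 Lm)
      ∧ (inner ℝ (Lp - Lm) n : ℝ)
          = (μp - μm) * (inner ℝ (fderiv ℝ U (xΓ, 0) (EuclideanSpace.single k 1, 0)) n : ℝ)
            + (μp + μm) * (inner ℝ (fderiv ℝ U (xΓ, 0) (0, 1)) n : ℝ)
              * fderiv ℝ φ xΓ (EuclideanSpace.single k 1) := by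
  classical
  have hUd : Differentiable ℝ U := hU.differentiable one_ne_zero
  have hφd : Differentiable ℝ φ := hφ.differentiable one_ne_zero
  set e : EuclideanSpace ℝ (Fin d) := EuclideanSpace.single k 1 with he
  set c : ℝ := fderiv ℝ φ xΓ e with hc
  set A := fderiv ℝ U (xΓ, 0) with hA
  -- derivative formula on the positive side
  have hpos : ∀ x ∈ {x | 0 < φ x},
      fderiv ℝ (fun y => U (y, |φ y|)) x e = fderiv ℝ U (x, φ x) (e, fderiv ℝ φ x e) := by
    intro x hx
    have hop : {y | 0 < φ y} ∈ 𝓝 x :=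
      (isOpen_lt continuous_const hφ.continuous).mem_nhds hx
    have hEq : (fun y => U (y, |φ y|)) =ᶠ[𝓝 x] (fun y => U (y, φ y)) := by
      filter_upwards [hop] with y hy
      rw [abs_of_pos hy]
    rw [hEq.fderiv_eq]
    have h1 : HasFDerivAt (fun y : EuclideanSpace ℝ (Fin d) => (y, φ y))
        ((ContinuousLinearMap.id ℝ _).prod (fderiv ℝ φ x)) x :=
      (hasFDerivAt_id x).prodMk (hφd x).hasFDerivAt
    have h2 := ((hUd (x, φ x)).hasFDerivAt.comp x h1)
    simp only [Function.comp_def] at h2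
    rw [h2.fderiv]
    rfl
  -- derivative formula on the negative side
  have hneg : ∀ x ∈ {x | φ x < 0},
      fderiv ℝ (fun y => U (y, |φ y|)) x e = fderiv ℝ U (x, -φ x) (e, -(fderiv ℝ φ x e)) := by
    intro x hx
    have hop : {y | φ y < 0} ∈ 𝓝 x :=
      (isOpen_lt hφ.continuous continuous_const).mem_nhds hx
    have hEq : (fun y => U (y, |φ y|)) =ᶠ[𝓝 x] (fun y => U (y, -φ y)) := by
      filter_upwards [hop] with y hy
      rw [abs_of_neg hy]
    rw [hEq.fderiv_eq]
    have h1 : HasFDerivAt (fun y : EuclideanSpace ℝ (Fin d) => (y, -φ y))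
        ((ContinuousLinearMap.id ℝ _).prod (-(fderiv ℝ φ x))) x :=
      (hasFDerivAt_id x).prodMk (hφd x).hasFDerivAt.neg
    have h2 := ((hUd (x, -φ x)).hasFDerivAt.comp x h1)
    simp only [Function.comp_def] at h2
    rw [h2.fderiv]
    rfl
  -- continuity of the derivative expressions
  have hcU : Continuous (fderiv ℝ U) := hU.continuous_fderiv one_ne_zero
  have hcφ : Continuous (fderiv ℝ φ) := hφ.continuous_fderiv one_ne_zero
  have hcφe : Continuous fun x => fderiv ℝ φ x e := hcφ.clm_apply continuous_const
  have hcontP : Continuous fun x => μp • fderiv ℝ U (x, φ x) (e, fderiv ℝ φ x e) :=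
    (continuous_const (y := μp)).smul
      ((((hcU.comp (continuous_id.prodMk hφ.continuous)) :
        Continuous fun x => fderiv ℝ U (x, φ x)).clm_apply
        ((continuous_const (y := e)).prodMk hcφe)))
  have hcontM : Continuous fun x => μm • fderiv ℝ U (x, -φ x) (e, -(fderiv ℝ φ x e)) :=
    (continuous_const (y := μm)).smul
      ((((hcU.comp (continuous_id.prodMk hφ.continuous.neg)) :
        Continuous fun x => fderiv ℝ U (x, -φ x)).clm_apply
        ((continuous_const (y := e)).prodMk hcφe.neg)))
  refine ⟨μp • A (e, c), μm • A (e, -c), ?_, ?_, ?_⟩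
  · have h1 : Tendsto (fun x => μp • fderiv ℝ U (x, φ x) (e, fderiv ℝ φ x e))
        (𝓝[{x | 0 < φ x}] xΓ) (𝓝 (μp • A (e, c))) := by
      have := hcontP.continuousAt (x := xΓ)
      rw [ContinuousAt, h0] at this
      exact this.mono_left nhdsWithin_le_nhds
    refine h1.congr' ?_
    filter_upwards [self_mem_nhdsWithin] with x hx
    rw [hpos x hx]
  · have h1 : Tendsto (fun x => μm • fderiv ℝ U (x, -φ x) (e, -(fderiv ℝ φ x e)))
        (𝓝[{x | φ x < 0}] xΓ) (𝓝 (μm • A (e, -c))) := by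
      have := hcontM.continuousAt (x := xΓ)
      rw [ContinuousAt, h0, neg_zero] at this
      exact this.mono_left nhdsWithin_le_nhds
    refine h1.congr' ?_
    filter_upwards [self_mem_nhdsWithin] with x hx
    rw [hneg x hx]
  · have hA1 : A (e, c) = A (e, 0) + c • A (0, 1) := by
      have hv : ((e, c) : EuclideanSpace ℝ (Fin d) × ℝ) = (e, 0) + c • (0, 1) := by
        simp [Prod.ext_iff]
      rw [hv, map_add, map_smul]
    have hA2 : A (e, -c) = A (e, 0) - c • A (0, 1) := by
      have hv : ((e, -c) : EuclideanSpace ℝ (Fin d) × ℝ) = (e, 0) - c • (0, 1) := by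
        simp [Prod.ext_iff]
      rw [hv, map_sub, map_smul]
    rw [hA1, hA2]
    simp only [smul_add, smul_sub, smul_smul, inner_sub_left, inner_add_left,
      real_inner_smul_left]
    ring
end

section
/- On ℝ³, let r² = x₁² + x₂² + x₃², let u(x) = (x₂x₃(r² − 1), x₃x₁(r² − 1), −2x₁x₂(r² − 1)), let p⁻ = 1 and p⁺ = 0, let μ⁻, μ⁺ ∈ ℝ with [μ] = μ⁺ − μ⁻, and let F(x) = (−x₁ − 2[μ]x₂x₃, −x₂ − 2[μ]x₃x₁, −x₃ + 4[μ]x₁x₂). Then for every point x on the unit sphere (r² = 1), with normal n = (x₁, x₂, x₃), the componentwise traction balance equation holds: for each k = 1, 2, 3, −(p⁺ − p⁻)n_k + [μ](∂u_k/∂n)(x) + [μ]((∂u/∂x_k)(x) · n) + F_k(x) = 0, where ∂u_k/∂n = ∇u_k · n and ∂u/∂x_k = (∂u₁/∂x_k, ∂u₂/∂x_k, ∂u₃/∂x_k), all derivatives of the globally smooth u being evaluated at x. -/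
/-- Exact velocity of Example 3:
`u = (x₂x₃(r²-1), x₃x₁(r²-1), -2x₁x₂(r²-1))` with `r² = x₁²+x₂²+x₃²`. -/
def u18 (x : Fin 3 → ℝ) : Fin 3 → ℝ :=
  ![x 1 * x 2 * ((x 0) ^ 2 + (x 1) ^ 2 + (x 2) ^ 2 - 1),
    x 2 * x 0 * ((x 0) ^ 2 + (x 1) ^ 2 + (x 2) ^ 2 - 1),
    -2 * x 0 * x 1 * ((x 0) ^ 2 + (x 1) ^ 2 + (x 2) ^ 2 - 1)]

/-- Interfacial force of Example 3, with `[μ] = μ⁺ - μ⁻`: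
`F = (-x₁ - 2[μ]x₂x₃, -x₂ - 2[μ]x₃x₁, -x₃ + 4[μ]x₁x₂)`. -/
noncomputable def F18 (μm μp : ℝ) (x : Fin 3 → ℝ) : Fin 3 → ℝ :=
  ![-(x 0) - 2 * (μp - μm) * x 1 * x 2,
    -(x 1) - 2 * (μp - μm) * x 2 * x 0,
    -(x 2) + 4 * (μp - μm) * x 0 * x 1]

lemma proj18 (x : Fin 3 → ℝ) (i : Fin 3) : HasFDerivAt (fun y : Fin 3 → ℝ => y i)
    (ContinuousLinearMap.proj i : (Fin 3 → ℝ) →L[ℝ] ℝ) x :=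
  hasFDerivAt_apply i x

lemma r18 (x : Fin 3 → ℝ) :
    HasFDerivAt (fun y : Fin 3 → ℝ => y 0 * y 0 + y 1 * y 1 + y 2 * y 2 - 1)
      ((x 0 • ContinuousLinearMap.proj 0 + x 0 • ContinuousLinearMap.proj 0 +
          (x 1 • ContinuousLinearMap.proj 1 + x 1 • ContinuousLinearMap.proj 1) +
        (x 2 • ContinuousLinearMap.proj 2 + x 2 • ContinuousLinearMap.proj 2)) :
        (Fin 3 → ℝ) →L[ℝ] ℝ) x :=
  ((((proj18 x 0).mul (proj18 x 0)).add ((proj18 x 1).mul (proj18 x 1))).add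
    ((proj18 x 2).mul (proj18 x 2))).sub_const 1

lemma key0 (x v : Fin 3 → ℝ) :
    fderiv ℝ (fun y => u18 y 0) x v =
      x 1 * x 2 * (2 * x 0 * v 0 + 2 * x 1 * v 1 + 2 * x 2 * v 2)
      + (x 0 ^ 2 + x 1 ^ 2 + x 2 ^ 2 - 1) * (x 2 * v 1 + x 1 * v 2) := by
  have h := ((proj18 x 1).mul (proj18 x 2)).mul (r18 x)
  have hfun : (fun y => u18 y 0)
      = fun y : Fin 3 → ℝ => y 1 * y 2 * (y 0 * y 0 + y 1 * y 1 + y 2 * y 2 - 1) := by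
    funext y; simp only [u18, Matrix.cons_val_zero]; ring
  rw [hfun]; erw [h.fderiv]
  simp
  ring

lemma key1 (x v : Fin 3 → ℝ) :
    fderiv ℝ (fun y => u18 y 1) x v =
      x 2 * x 0 * (2 * x 0 * v 0 + 2 * x 1 * v 1 + 2 * x 2 * v 2)
      + (x 0 ^ 2 + x 1 ^ 2 + x 2 ^ 2 - 1) * (x 0 * v 2 + x 2 * v 0) := by
  have h := ((proj18 x 2).mul (proj18 x 0)).mul (r18 x)
  have hfun : (fun y => u18 y 1)
      = fun y : Fin 3 → ℝ => y 2 * y 0 * (y 0 * y 0 + y 1 * y 1 + y 2 * y 2 - 1) := by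
    funext y; simp only [u18, Matrix.cons_val_zero, Matrix.cons_val_one, Matrix.head_cons]; ring
  rw [hfun]; erw [h.fderiv]
  simp
  ring

lemma key2 (x v : Fin 3 → ℝ) :
    fderiv ℝ (fun y => u18 y 2) x v =
      -2 * (x 0 * x 1 * (2 * x 0 * v 0 + 2 * x 1 * v 1 + 2 * x 2 * v 2)
      + (x 0 ^ 2 + x 1 ^ 2 + x 2 ^ 2 - 1) * (x 1 * v 0 + x 0 * v 1)) := by
  have h := (((proj18 x 0).mul (proj18 x 1)).mul (r18 x)).const_mul (-2)
  have hfun : (fun y => u18 y 2)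
      = fun y : Fin 3 → ℝ =>
        -2 * (y 0 * y 1 * (y 0 * y 0 + y 1 * y 1 + y 2 * y 2 - 1)) := by
    funext y; simp only [u18, Matrix.cons_val_two, Matrix.tail_cons, Matrix.head_cons, Matrix.cons_val_zero, Matrix.cons_val_one]; norm_num; ring
  rw [hfun]; erw [h.fderiv]
  simp
  ring

lemma case18 (μm μp : ℝ) (x : Fin 3 → ℝ)
    (hx : (x 0) ^ 2 + (x 1) ^ 2 + (x 2) ^ 2 = 1) (k : Fin 3) (hk : k = 0 ∨ k = 1 ∨ k = 2) :
    -((0 : ℝ) - 1) * x k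
      + (μp - μm) * (∑ j, fderiv ℝ (fun y => u18 y k) x (Pi.single j 1) * x j)
      + (μp - μm) * (∑ j, fderiv ℝ (fun y => u18 y j) x (Pi.single k 1) * x j)
      + F18 μm μp x k = 0 := by
  rcases hk with rfl | rfl | rfl <;>
    simp only [Fin.sum_univ_three, key0, key1, key2, F18, Fin.isValue,
      Matrix.cons_val_zero, Matrix.cons_val_one, Matrix.head_cons, Matrix.cons_val_two,
      Matrix.tail_cons, Pi.single_apply, Fin.reduceEq, if_true, if_false, ite_true, ite_false,
      reduceIte]
  · linear_combination (μp - μm) * (3 * x 1 * x 2) * hx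
  · linear_combination (μp - μm) * (3 * x 2 * x 0) * hx
  · linear_combination (μp - μm) * (-6 * x 0 * x 1) * hx

/-- Componentwise traction balance equation of Example 3 on the unit sphere
(`p⁻ = 1`, `p⁺ = 0`, normal `n = (x₁,x₂,x₃)`): for each `k`,
`-(p⁺-p⁻)n_k + [μ](∂u_k/∂n) + [μ]((∂u/∂x_k)·n) + F_k = 0`, where the derivatives of the
globally smooth `u` are evaluated at `x`. -/
theorem stmt_18 (μm μp : ℝ) (x : Fin 3 → ℝ)
    (hx : (x 0) ^ 2 + (x 1) ^ 2 + (x 2) ^ 2 = 1) (k : Fin 3) :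
    -((0 : ℝ) - 1) * x k
      + (μp - μm) * (∑ j, fderiv ℝ (fun y => u18 y k) x (Pi.single j 1) * x j)
      + (μp - μm) * (∑ j, fderiv ℝ (fun y => u18 y j) x (Pi.single k 1) * x j)
      + F18 μm μp x k = 0 := by
  have hk : k = 0 ∨ k = 1 ∨ k = 2 := by omega
  exact case18 μm μp x hx k hk
end
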